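/- Let r, r' ∈ ℝ^{4,2} be lightlike with ⟨r,p⟩ = ⟨r',p⟩ = 1 and ⟨r,r'⟩ ≠ 0 (adjacent spheres of a discrete Ribaucour sphere congruence). Let f⁺, f⁻, f'⁺, f'⁻ be 2-dimensional totally isotropic subspaces with r ∈ f⁺ ∩ f⁻, r' ∈ f'⁺ ∩ f'⁻, f⁺ ∩ f'⁺ ≠ {0} and f⁻ ∩ f'⁻ ≠ {0} (adjacent contact elements of two envelopes f^± of the congruence). For ε ∈ {+,−} let q^ε ∈ f^ε and q'^ε ∈ f'^ε be nonzero vectors orthogonal to p (these exist and are unique up to scale, since ⟨r,p⟩ ≠ 0 and ⟨r',p⟩ ≠ 0). Set a := r' − r. Then ⟨a,a⟩ = −2⟨r,r'⟩ ≠ 0, ⟨a,p⟩ = 0, so σ_a is an M-Lie inversion, and σ_a maps span{q'⁺, q'⁻, r' + p} onto span{q⁺, q⁻, r + p}; in particular σ_a(r' + p) = r + p, σ_a(q'^ε) ∈ span{q^ε}, and σ_a(p) = p. (Theorem: the circles intersecting the spheres of a Ribaucour sphere congruence orthogonally in the point spheres of two envelopes form a circle congruence in which adjacent circles are exchanged by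 M-Lie inversions; this congruence is cyclic.) -/

import Mathlib

noncomputable section

/-- The vector space ℝ^{4,2}, modeled as `Fin 6 → ℝ`. -/
abbrev R42 : Type := Fin 6 → ℝ

/-- The symmetric bilinear form of signature (4,2) on ℝ^{4,2}. -/
def bform : R42 →ₗ[ℝ] R42 →ₗ[ℝ] ℝ :=
  LinearMap.mk₂ ℝ
    (fun x y => x 0 * y 0 + x 1 * y 1 + x 2 * y 2 + x 3 * y 3 - x 4 * y 4 - x 5 * y 5)
    (fun x x' y => by simp only [Pi.add_apply]; ring)
    (fun c x y => by simp only [Pi.smul_apply, smul_eq_mul]; ring)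
    (fun x y y' => by simp only [Pi.add_apply]; ring)
    (fun c x y => by simp only [Pi.smul_apply, smul_eq_mul]; ring)

/-- A lightlike vector: nonzero and isotropic. Represents an oriented 2-sphere. -/
def IsLightlike (v : R42) : Prop := v ≠ 0 ∧ bform v v = 0

/-- The Lie inversion with respect to the linear sphere complex determined by `a`. -/
def lieInv (a r : R42) : R42 := r - (2 * bform r a / bform a a) • a

lemma bform_symm (x y : R42) : bform x y = bform y x := by
  simp only [bform, LinearMap.mk₂_apply]; ring

/-- `lieInv a` as a linear map. -/
def lieL (a : R42) : R42 →ₗ[ℝ] R42 :=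
  LinearMap.id - (2 / bform a a) • ((bform.flip a).smulRight a)

lemma lieL_apply (a x : R42) : lieL a x = lieInv a x := by
  simp only [lieL, lieInv, LinearMap.sub_apply, LinearMap.id_apply, LinearMap.smul_apply,
    LinearMap.smulRight_apply, LinearMap.flip_apply, smul_smul]
  congr 1
  ring_nf

lemma span_pair_of (p r q : R42) (f : Submodule ℝ R42)
    (hf2 : Module.finrank ℝ f = 2) (hrf : r ∈ f) (hqf : q ∈ f)
    (hrp : bform r p = 1) (hq0 : q ≠ 0) (hqp : bform q p = 0) :
    f = Submodule.span ℝ ({r, q} : Set R42) := by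
  have hli : LinearIndependent ℝ ![r, q] := by
    rw [LinearIndependent.pair_iff]
    intro s t hst
    have h1 : bform (s • r + t • q) p = s := by
      simp only [map_add, map_smul, LinearMap.add_apply, LinearMap.smul_apply, smul_eq_mul,
        hrp, hqp]
      ring
    rw [hst] at h1
    simp only [map_zero, LinearMap.zero_apply] at h1
    subst h1
    constructor
    · rfl
    · have : t • q = 0 := by rw [← hst]; simp
      rcases smul_eq_zero.mp this with h | h
      · exact h
      · exact absurd h hq0
  have hle : Submodule.span ℝ ({r, q} : Set R42) ≤ f := by
    rw [Submodule.span_le]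
    intro x hx
    rcases hx with h | h
    · simpa [h] using hrf
    · simp only [Set.mem_singleton_iff] at h; simpa [h] using hqf
  have hrange : Set.range ![r, q] = ({r, q} : Set R42) := by
    simp [Set.pair_comm]
  have hfin : Module.finrank ℝ (Submodule.span ℝ ({r, q} : Set R42)) = 2 := by
    rw [← hrange]
    simpa using finrank_span_eq_card hli
  exact (Submodule.eq_of_le_of_finrank_eq hle (by rw [hfin, hf2])).symm

/-- Key lemma: the Lie inversion sends `q'` to a nonzero multiple of `q`. -/
lemma key (p r r' q q' : R42) (f f' : Submodule ℝ R42)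
    (hf2 : Module.finrank ℝ f = 2) (hfi : ∀ u ∈ f, ∀ v ∈ f, bform u v = 0)
    (hf2' : Module.finrank ℝ f' = 2) (hfi' : ∀ u ∈ f', ∀ v ∈ f', bform u v = 0)
    (hrf : r ∈ f) (hr'f' : r' ∈ f')
    (hrp : bform r p = 1) (hr'p : bform r' p = 1) (hrr' : bform r r' ≠ 0)
    (hqf : q ∈ f) (hq0 : q ≠ 0) (hqp : bform q p = 0)
    (hq'f : q' ∈ f') (hq'0 : q' ≠ 0) (hq'p : bform q' p = 0)
    (hint : f ⊓ f' ≠ ⊥) :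
    ∃ c : ℝ, c ≠ 0 ∧ lieInv (r' - r) q' = c • q := by
  obtain ⟨w, hw, hw0⟩ := (Submodule.ne_bot_iff _).mp hint
  obtain ⟨hwf, hwf'⟩ := Submodule.mem_inf.mp hw
  have hfspan := span_pair_of p r q f hf2 hrf hqf hrp hq0 hqp
  have hf'span := span_pair_of p r' q' f' hf2' hr'f' hq'f hr'p hq'0 hq'p
  obtain ⟨α, β, hαβ⟩ := Submodule.mem_span_pair.mp (hfspan ▸ hwf)
  obtain ⟨α', β', hαβ'⟩ := Submodule.mem_span_pair.mp (hf'span ▸ hwf')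
  -- α = α'
  have hwp : bform w p = α := by
    rw [← hαβ]
    simp [map_add, map_smul, LinearMap.add_apply, LinearMap.smul_apply, smul_eq_mul, hrp, hqp]
  have hwp' : bform w p = α' := by
    rw [← hαβ']
    simp [map_add, map_smul, LinearMap.add_apply, LinearMap.smul_apply, smul_eq_mul, hr'p, hq'p]
  have hα : α' = α := by rw [← hwp, ← hwp']
  subst hα
  -- β' ≠ 0
  have hβ'0 : β' ≠ 0 := by
    intro h
    subst h
    simp only [zero_smul, add_zero] at hαβ'
    have hα0 : α' ≠ 0 := by rintro rfl; simp at hαβ'; exact hw0 hαβ'.symm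
    have hr'f : r' ∈ f := by
      have : r' = α'⁻¹ • w := by rw [← hαβ', smul_smul, inv_mul_cancel₀ hα0, one_smul]
      rw [this]; exact Submodule.smul_mem _ _ hwf
    exact hrr' (hfi r hrf r' hr'f)
  have hβ0 : β ≠ 0 := by
    intro h
    subst h
    simp only [zero_smul, add_zero] at hαβ
    have hα0 : α' ≠ 0 := by rintro rfl; simp at hαβ; exact hw0 hαβ.symm
    have hrf' : r ∈ f' := by
      have : r = α'⁻¹ • w := by rw [← hαβ, smul_smul, inv_mul_cancel₀ hα0, one_smul]
      rw [this]; exact Submodule.smul_mem _ _ hwf'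
    exact hrr' ((bform_symm r r') ▸ hfi' r' hr'f' r hrf')
  set t := bform r r' with ht
  -- facts about isotropy
  have hrr : bform r r = 0 := hfi r hrf r hrf
  have hr'r' : bform r' r' = 0 := hfi' r' hr'f' r' hr'f'
  have hqr : bform q r = 0 := hfi q hqf r hrf
  have hq'r' : bform q' r' = 0 := hfi' q' hq'f r' hr'f'
  -- bform w r = 0 from the left expansion
  have hwr : bform w r = 0 := by
    rw [← hαβ]
    simp [map_add, map_smul, LinearMap.add_apply, LinearMap.smul_apply, smul_eq_mul, hrr, hqr]
  -- bform q' r from the right expansion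
  have hq'r : β' * bform q' r = -(α' * t) := by
    have := hwr
    rw [← hαβ'] at this
    simp only [map_add, map_smul, LinearMap.add_apply, LinearMap.smul_apply, smul_eq_mul] at this
    rw [bform_symm r' r] at this
    linarith
  -- compute the coefficient
  have haa : bform (r' - r) (r' - r) = -2 * t := by
    simp only [map_sub, LinearMap.sub_apply, hrr, hr'r', bform_symm r' r]
    ring
  have hcoef : 2 * bform q' (r' - r) / bform (r' - r) (r' - r) = -(α' / β') := by
    have h1 : bform q' (r' - r) = α' * t / β' := by
      have : bform q' r = -(α' * t) / β' := by
        field_simp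
        linarith [hq'r]
      simp only [map_sub, hq'r', this]
      field_simp
      ring
    rw [h1, haa]
    field_simp
  have hle : lieInv (r' - r) q' = q' + (α' / β') • (r' - r) := by
    rw [lieInv, hcoef]
    module
  -- now conclude
  have hq'eq : β' • q' = α' • r + β • q - α' • r' := by
    have h := hαβ.trans hαβ'.symm
    linear_combination (norm := module) -h
  refine ⟨β'⁻¹ * β, mul_ne_zero (inv_ne_zero hβ'0) hβ0, ?_⟩
  have hfinal : β' • lieInv (r' - r) q' = β • q := by
    rw [hle, smul_add, smul_smul, mul_div_cancel₀ _ hβ'0, hq'eq]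
    module
  calc lieInv (r' - r) q' = β'⁻¹ • (β' • lieInv (r' - r) q') := by
        rw [smul_smul, inv_mul_cancel₀ hβ'0, one_smul]
    _ = (β'⁻¹ * β) • q := by rw [hfinal, smul_smul]

/-- For adjacent spheres `r`, `r'` of a discrete Ribaucour sphere
congruence with envelopes given by adjacent contact elements `f^±`, `f'^±` and point
sphere maps `q^±`, `q'^±`, the M-Lie inversion `σ_a` with `a = r' − r` maps the circle
`span {q'⁺, q'⁻, r' + p}` onto the circle `span {q⁺, q⁻, r + p}`. -/
theorem stmt_10 (p r r' : R42)
    (hp : bform p p = -1)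
    (hr : IsLightlike r) (hr' : IsLightlike r')
    (hrp : bform r p = 1) (hr'p : bform r' p = 1) (hrr' : bform r r' ≠ 0)
    (fP fM fP' fM' : Submodule ℝ R42)
    (hfP : Module.finrank ℝ fP = 2 ∧ ∀ u ∈ fP, ∀ v ∈ fP, bform u v = 0)
    (hfM : Module.finrank ℝ fM = 2 ∧ ∀ u ∈ fM, ∀ v ∈ fM, bform u v = 0)
    (hfP' : Module.finrank ℝ fP' = 2 ∧ ∀ u ∈ fP', ∀ v ∈ fP', bform u v = 0)
    (hfM' : Module.finrank ℝ fM' = 2 ∧ ∀ u ∈ fM', ∀ v ∈ fM', bform u v = 0)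
    (hrfP : r ∈ fP) (hrfM : r ∈ fM) (hr'fP' : r' ∈ fP') (hr'fM' : r' ∈ fM')
    (hintP : fP ⊓ fP' ≠ ⊥) (hintM : fM ⊓ fM' ≠ ⊥)
    (qP qM qP' qM' : R42)
    (hqP : qP ∈ fP ∧ qP ≠ 0 ∧ bform qP p = 0)
    (hqM : qM ∈ fM ∧ qM ≠ 0 ∧ bform qM p = 0)
    (hqP' : qP' ∈ fP' ∧ qP' ≠ 0 ∧ bform qP' p = 0)
    (hqM' : qM' ∈ fM' ∧ qM' ≠ 0 ∧ bform qM' p = 0)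
    (a : R42) (ha : a = r' - r) :
    bform a a = -2 * bform r r' ∧ bform a a ≠ 0 ∧ bform a p = 0 ∧
    lieInv a '' ((Submodule.span ℝ ({qP', qM', r' + p} : Set R42) : Submodule ℝ R42) : Set R42) =
      ((Submodule.span ℝ ({qP, qM, r + p} : Set R42) : Submodule ℝ R42) : Set R42) ∧
    lieInv a (r' + p) = r + p ∧
    lieInv a qP' ∈ Submodule.span ℝ ({qP} : Set R42) ∧
    lieInv a qM' ∈ Submodule.span ℝ ({qM} : Set R42) ∧
    lieInv a p = p := by
  subst ha
  set t := bform r r' with ht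
  have hrr : bform r r = 0 := hr.2
  have hr'r' : bform r' r' = 0 := hr'.2
  have haa : bform (r' - r) (r' - r) = -2 * t := by
    simp only [map_sub, LinearMap.sub_apply, hrr, hr'r', bform_symm r' r]
    ring
  have haa0 : bform (r' - r) (r' - r) ≠ 0 := by
    rw [haa]; intro h
    apply hrr'
    linarith
  have hap : bform (r' - r) p = 0 := by
    simp only [map_sub, LinearMap.sub_apply, hrp, hr'p]
    ring
  have hpfix : lieInv (r' - r) p = p := by
    rw [lieInv]
    rw [bform_symm p (r' - r), hap]
    simp
  have hrpfix : lieInv (r' - r) (r' + p) = r + p := by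
    rw [lieInv]
    have h1 : bform (r' + p) (r' - r) = -t := by
      simp only [map_add, map_sub, LinearMap.add_apply, LinearMap.sub_apply, hr'r',
        bform_symm r' r, bform_symm p r', bform_symm p r, hrp, hr'p]
      ring
    rw [h1, haa]
    have h2 : 2 * -t / (-2 * t) = 1 := by
      field_simp
    rw [h2]
    module
  obtain ⟨cP, hcP0, hcP⟩ := key p r r' qP qP' fP fP' hfP.1 hfP.2 hfP'.1 hfP'.2 hrfP hr'fP'
    hrp hr'p hrr' hqP.1 hqP.2.1 hqP.2.2 hqP'.1 hqP'.2.1 hqP'.2.2 hintP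
  obtain ⟨cM, hcM0, hcM⟩ := key p r r' qM qM' fM fM' hfM.1 hfM.2 hfM'.1 hfM'.2 hrfM hr'fM'
    hrp hr'p hrr' hqM.1 hqM.2.1 hqM.2.2 hqM'.1 hqM'.2.1 hqM'.2.2 hintM
  have hLeq : lieInv (r' - r) = ⇑(lieL (r' - r)) := funext fun x => (lieL_apply _ x).symm
  refine ⟨haa, haa0, hap, ?_, hrpfix, ?_, ?_, hpfix⟩
  · -- image equality
    have h1 : Submodule.map (lieL (r' - r)) (Submodule.span ℝ ({qP', qM', r' + p} : Set R42)) ≤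
        Submodule.span ℝ ({qP, qM, r + p} : Set R42) := by
      rw [Submodule.map_le_iff_le_comap, Submodule.span_le]
      intro x hx
      simp only [Set.mem_insert_iff, Set.mem_singleton_iff] at hx
      rcases hx with rfl | rfl | rfl
      · simp only [Submodule.mem_comap, SetLike.mem_coe, lieL_apply, hcP]
        exact Submodule.smul_mem _ _ (Submodule.subset_span (by simp))
      · simp only [Submodule.mem_comap, SetLike.mem_coe, lieL_apply, hcM]
        exact Submodule.smul_mem _ _ (Submodule.subset_span (by simp))
      · simp only [Submodule.mem_comap, SetLike.mem_coe, lieL_apply, hrpfix]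
        exact Submodule.subset_span (by simp)
    have h2 : Submodule.span ℝ ({qP, qM, r + p} : Set R42) ≤
        Submodule.map (lieL (r' - r)) (Submodule.span ℝ ({qP', qM', r' + p} : Set R42)) := by
      rw [Submodule.span_le]
      intro x hx
      simp only [Set.mem_insert_iff, Set.mem_singleton_iff] at hx
      rcases hx with rfl | rfl | rfl
      · refine ⟨cP⁻¹ • qP', Submodule.smul_mem _ _ (Submodule.subset_span (by simp)), ?_⟩
        rw [map_smul, lieL_apply, hcP, smul_smul, inv_mul_cancel₀ hcP0, one_smul]
      · refine ⟨cM⁻¹ • qM', Submodule.smul_mem _ _ (Submodule.subset_span (by simp)), ?_⟩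
        rw [map_smul, lieL_apply, hcM, smul_smul, inv_mul_cancel₀ hcM0, one_smul]
      · exact ⟨r' + p, Submodule.subset_span (by simp), by rw [lieL_apply, hrpfix]⟩
    rw [hLeq, ← Submodule.map_coe]
    exact congrArg _ (le_antisymm h1 h2)
  · rw [hcP]
    exact Submodule.smul_mem _ _ (Submodule.subset_span rfl)
  · rw [hcM]
    exact Submodule.smul_mem _ _ (Submodule.subset_span rfl)
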